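/- Shifted dual-objective identity (core computation of Theorem 1, Appendix C): let ((λ_t, ρ_t)_{t=0}^T, (μ_t, ν̲_t, ν̄_t, σ_t)_{t=0}^{T−1}) be dual feasible with dual objective d₀ for data (x₀, (v̲_t), (v̄_t)). Let u₀ ∈ ℝ^p and e₀ ∈ ℝ^n be arbitrary, set x₁ := A x₀ + B u₀ + e₀, and define π₁ := −|Q x₀|² − |R u₀|², π₂ := |ρ₀/2 − Q x₀|² + |σ₀/2 − R u₀|², π₃ := (h − F x₀ − G u₀)ᵀμ₀ + (V u₀ − v̲₀)ᵀν̲₀ + (v̄₀ − V u₀)ᵀν̄₀, and π₄ := −e₀ᵀλ₁. Then the dual objective of the shifted multipliers for the data (x₁, (v̲'_t), (v̄'_t)) equals d₀ + π₁ + π₂ + π₃ + π₄, where (v̲'_t), (v̄'_t) are the shifted bounds. -/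
import Mathlib


open Matrix

/-- The squared Euclidean norm `|v|²` of a vector in `ℝ^k`. -/
noncomputable def sqNorm {k : ℕ} (v : Fin k → ℝ) : ℝ := ∑ i, v i ^ 2

variable {n p q r c m : ℕ}

/-- Primal feasibility of a trajectory `((x_t)_{t=0}^T, (u_t)_{t=0}^{T-1})` for the data
`(x̄, (v̲_t), (v̄_t))` of the QP relaxation of the hybrid MPC problem. -/
def PrimalFeasible (T : ℕ)
    (A : Matrix (Fin n) (Fin n) ℝ) (B : Matrix (Fin n) (Fin p) ℝ)
    (F : Matrix (Fin c) (Fin n) ℝ) (G : Matrix (Fin c) (Fin p) ℝ)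
    (V : Matrix (Fin m) (Fin p) ℝ) (h : Fin c → ℝ)
    (xbar : Fin n → ℝ) (vlo vhi : ℕ → Fin m → ℝ)
    (x : ℕ → Fin n → ℝ) (u : ℕ → Fin p → ℝ) : Prop :=
  x 0 = xbar ∧
  (∀ t < T, x (t + 1) = A *ᵥ x t + B *ᵥ u t) ∧
  (∀ t < T, ∀ i, (F *ᵥ x t + G *ᵥ u t) i ≤ h i) ∧
  (∀ t < T, ∀ i, vlo t i ≤ (V *ᵥ u t) i ∧ (V *ᵥ u t) i ≤ vhi t i)

/-- Cost `Σ_{t=0}^T |Q x_t|² + Σ_{t=0}^{T-1} |R u_t|²` of a trajectory. -/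
noncomputable def trajCost (T : ℕ) (Q : Matrix (Fin q) (Fin n) ℝ) (R : Matrix (Fin r) (Fin p) ℝ)
    (x : ℕ → Fin n → ℝ) (u : ℕ → Fin p → ℝ) : ℝ :=
  ∑ t ∈ Finset.range (T + 1), sqNorm (Q *ᵥ x t) + ∑ t ∈ Finset.range T, sqNorm (R *ᵥ u t)

/-- Dual feasibility of a tuple of multipliers
`((λ_t, ρ_t)_{t=0}^T, (μ_t, ν̲_t, ν̄_t, σ_t)_{t=0}^{T-1})`.
Note that dual feasibility does not depend on the bound sequences `(v̲_t), (v̄_t)`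
nor on the initial state `x̄`. -/
def DualFeasible (T : ℕ)
    (A : Matrix (Fin n) (Fin n) ℝ) (B : Matrix (Fin n) (Fin p) ℝ)
    (Q : Matrix (Fin q) (Fin n) ℝ) (R : Matrix (Fin r) (Fin p) ℝ)
    (F : Matrix (Fin c) (Fin n) ℝ) (G : Matrix (Fin c) (Fin p) ℝ)
    (V : Matrix (Fin m) (Fin p) ℝ)
    (lam : ℕ → Fin n → ℝ) (rho : ℕ → Fin q → ℝ)
    (mu : ℕ → Fin c → ℝ) (nlo nhi : ℕ → Fin m → ℝ) (sig : ℕ → Fin r → ℝ) : Prop :=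
  (∀ t < T, Qᵀ *ᵥ rho t + lam t - Aᵀ *ᵥ lam (t + 1) + Fᵀ *ᵥ mu t = 0) ∧
  Qᵀ *ᵥ rho T + lam T = 0 ∧
  (∀ t < T, Rᵀ *ᵥ sig t - Bᵀ *ᵥ lam (t + 1) + Gᵀ *ᵥ mu t + Vᵀ *ᵥ (nhi t - nlo t) = 0) ∧
  (∀ t < T, ∀ i, 0 ≤ mu t i) ∧ (∀ t < T, ∀ i, 0 ≤ nlo t i) ∧ (∀ t < T, ∀ i, 0 ≤ nhi t i)

/-- The dual objective
`d := −Σ_{t=0}^T |ρ_t/2|² − Σ_{t=0}^{T−1}(|σ_t/2|² + hᵀμ_t + v̄_tᵀν̄_t − v̲_tᵀν̲_t) − x̄ᵀλ_0`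
for the data `(x̄, (v̲_t), (v̄_t))`. -/
noncomputable def dualObj (T : ℕ) (h : Fin c → ℝ) (xbar : Fin n → ℝ) (vlo vhi : ℕ → Fin m → ℝ)
    (lam : ℕ → Fin n → ℝ) (rho : ℕ → Fin q → ℝ)
    (mu : ℕ → Fin c → ℝ) (nlo nhi : ℕ → Fin m → ℝ) (sig : ℕ → Fin r → ℝ) : ℝ :=
  -(∑ t ∈ Finset.range (T + 1), sqNorm (fun i => rho t i / 2))
    - ∑ t ∈ Finset.range T,
        (sqNorm (fun i => sig t i / 2) + h ⬝ᵥ mu t + vhi t ⬝ᵥ nhi t - vlo t ⬝ᵥ nlo t)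
    - xbar ⬝ᵥ lam 0

/-- Shift of a `{0,…,T}`-indexed family of multipliers (the `λ_t` or `ρ_t`):
`w'_t := w_{t+1}` for `t = 0,…,T−1` and `w'_T := 0`. -/
noncomputable def shiftT (T : ℕ) {k : ℕ} (w : ℕ → Fin k → ℝ) : ℕ → Fin k → ℝ :=
  fun t => if t < T then w (t + 1) else 0

/-- Shift of a `{0,…,T−1}`-indexed family (the `μ_t, ν̲_t, ν̄_t, σ_t` or the lower
bounds `v̲_t`): `w'_t := w_{t+1}` for `t = 0,…,T−2` and `w'_{T−1} := 0`. -/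
noncomputable def shiftS (T : ℕ) {k : ℕ} (w : ℕ → Fin k → ℝ) : ℕ → Fin k → ℝ :=
  fun t => if t + 1 < T then w (t + 1) else 0

/-- Shift of the upper bounds `v̄_t`: `v̄'_t := v̄_{t+1}` for `t = 0,…,T−2` and
`v̄'_{T−1} := 1` (the all-ones vector). -/
noncomputable def shiftHi (T : ℕ) {k : ℕ} (w : ℕ → Fin k → ℝ) : ℕ → Fin k → ℝ :=
  fun t => if t + 1 < T then w (t + 1) else fun _ => 1


private lemma dot_transpose_mulVec {a b : ℕ} (M : Matrix (Fin a) (Fin b) ℝ)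
    (x : Fin b → ℝ) (y : Fin a → ℝ) : x ⬝ᵥ (Mᵀ *ᵥ y) = (M *ᵥ x) ⬝ᵥ y := by
  rw [Matrix.dotProduct_mulVec, Matrix.vecMul_transpose]

private lemma sqNorm_shift_expand {k : ℕ} (a b : Fin k → ℝ) :
    sqNorm (fun i => a i / 2 - b i) =
      sqNorm (fun i => a i / 2) - b ⬝ᵥ a + sqNorm b := by
  simp only [sqNorm, dotProduct]
  rw [← Finset.sum_sub_distrib, ← Finset.sum_add_distrib]
  exact Finset.sum_congr rfl fun i _ => by ring

/-- **Shifted dual-objective identity** (core computation of Theorem 1): the dual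
objective of the shifted multipliers for the shifted data `(x₁, (v̲'_t), (v̄'_t))`,
where `x₁ = A x₀ + B u₀ + e₀`, equals `d₀ + π₁ + π₂ + π₃ + π₄`. -/
theorem shifted_dual_objective_identity (n p q r c m T : ℕ) (hT : 1 ≤ T)
    (A : Matrix (Fin n) (Fin n) ℝ) (B : Matrix (Fin n) (Fin p) ℝ)
    (Q : Matrix (Fin q) (Fin n) ℝ) (R : Matrix (Fin r) (Fin p) ℝ)
    (F : Matrix (Fin c) (Fin n) ℝ) (G : Matrix (Fin c) (Fin p) ℝ)
    (V : Matrix (Fin m) (Fin p) ℝ) (h : Fin c → ℝ)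
    (x0 : Fin n → ℝ) (u0 : Fin p → ℝ) (e0 : Fin n → ℝ)
    (vlo vhi : ℕ → Fin m → ℝ)
    (lam : ℕ → Fin n → ℝ) (rho : ℕ → Fin q → ℝ)
    (mu : ℕ → Fin c → ℝ) (nlo nhi : ℕ → Fin m → ℝ) (sig : ℕ → Fin r → ℝ)
    (hdual : DualFeasible T A B Q R F G V lam rho mu nlo nhi sig) :
    dualObj T h (A *ᵥ x0 + B *ᵥ u0 + e0) (shiftS T vlo) (shiftHi T vhi)
        (shiftT T lam) (shiftT T rho) (shiftS T mu) (shiftS T nlo) (shiftS T nhi)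
        (shiftS T sig)
      = dualObj T h x0 vlo vhi lam rho mu nlo nhi sig
        + (-(sqNorm (Q *ᵥ x0) + sqNorm (R *ᵥ u0)))
        + (sqNorm (fun i => rho 0 i / 2 - (Q *ᵥ x0) i) +
          sqNorm (fun i => sig 0 i / 2 - (R *ᵥ u0) i))
        + ((h - F *ᵥ x0 - G *ᵥ u0) ⬝ᵥ mu 0 + (V *ᵥ u0 - vlo 0) ⬝ᵥ nlo 0 +
          (vhi 0 - V *ᵥ u0) ⬝ᵥ nhi 0)
        + (-(e0 ⬝ᵥ lam 1)) := by
  obtain ⟨T', rfl⟩ : ∃ T', T = T' + 1 := ⟨T - 1, (Nat.succ_pred_eq_of_pos hT).symm⟩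
  obtain ⟨hst1, _, hst2, _, _, _⟩ := hdual
  have h1 := hst1 0 (Nat.succ_pos T')
  have h2 := hst2 0 (Nat.succ_pos T')
  -- scalar stationarity identities
  have e1 : (Q *ᵥ x0) ⬝ᵥ rho 0 + x0 ⬝ᵥ lam 0 - (A *ᵥ x0) ⬝ᵥ lam 1 + (F *ᵥ x0) ⬝ᵥ mu 0 = 0 := by
    have := congrArg (fun v => x0 ⬝ᵥ v) h1
    simpa [dotProduct_add, dotProduct_sub, dot_transpose_mulVec] using this
  have e2 : (R *ᵥ u0) ⬝ᵥ sig 0 - (B *ᵥ u0) ⬝ᵥ lam 1 + (G *ᵥ u0) ⬝ᵥ mu 0 +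
      ((V *ᵥ u0) ⬝ᵥ nhi 0 - (V *ᵥ u0) ⬝ᵥ nlo 0) = 0 := by
    have := congrArg (fun v => u0 ⬝ᵥ v) h2
    simpa [dotProduct_add, dotProduct_sub, dot_transpose_mulVec] using this
  -- sum over ρ
  have hSρ : ∑ t ∈ Finset.range (T' + 1 + 1), sqNorm (fun i => shiftT (T' + 1) rho t i / 2)
      = ∑ t ∈ Finset.range (T' + 1 + 1), sqNorm (fun i => rho t i / 2)
        - sqNorm (fun i => rho 0 i / 2) := by
    rw [Finset.sum_range_succ,
      Finset.sum_range_succ' (fun t => sqNorm (fun i => rho t i / 2)) (T' + 1)]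
    have hz : sqNorm (fun i => shiftT (T' + 1) rho (T' + 1) i / 2) = 0 := by
      simp [shiftT, sqNorm]
    have hc : ∀ t ∈ Finset.range (T' + 1),
        sqNorm (fun i => shiftT (T' + 1) rho t i / 2) = sqNorm (fun i => rho (t + 1) i / 2) :=
      fun t ht => by simp [shiftT, Finset.mem_range.mp ht]
    rw [hz, Finset.sum_congr rfl hc]; ring
  -- sum over σ, μ, ν
  have hSσ : ∑ t ∈ Finset.range (T' + 1),
        (sqNorm (fun i => shiftS (T' + 1) sig t i / 2) + h ⬝ᵥ shiftS (T' + 1) mu t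
          + shiftHi (T' + 1) vhi t ⬝ᵥ shiftS (T' + 1) nhi t
          - shiftS (T' + 1) vlo t ⬝ᵥ shiftS (T' + 1) nlo t)
      = ∑ t ∈ Finset.range (T' + 1),
          (sqNorm (fun i => sig t i / 2) + h ⬝ᵥ mu t + vhi t ⬝ᵥ nhi t - vlo t ⬝ᵥ nlo t)
        - (sqNorm (fun i => sig 0 i / 2) + h ⬝ᵥ mu 0 + vhi 0 ⬝ᵥ nhi 0 - vlo 0 ⬝ᵥ nlo 0) := by
    rw [Finset.sum_range_succ,
      Finset.sum_range_succ'
        (fun t => sqNorm (fun i => sig t i / 2) + h ⬝ᵥ mu t + vhi t ⬝ᵥ nhi t - vlo t ⬝ᵥ nlo t) T']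
    have hz : sqNorm (fun i => shiftS (T' + 1) sig T' i / 2) + h ⬝ᵥ shiftS (T' + 1) mu T'
          + shiftHi (T' + 1) vhi T' ⬝ᵥ shiftS (T' + 1) nhi T'
          - shiftS (T' + 1) vlo T' ⬝ᵥ shiftS (T' + 1) nlo T' = 0 := by
      simp [shiftS, shiftHi, sqNorm]
    have hc : ∀ t ∈ Finset.range T',
        sqNorm (fun i => shiftS (T' + 1) sig t i / 2) + h ⬝ᵥ shiftS (T' + 1) mu t
          + shiftHi (T' + 1) vhi t ⬝ᵥ shiftS (T' + 1) nhi t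
          - shiftS (T' + 1) vlo t ⬝ᵥ shiftS (T' + 1) nlo t
        = sqNorm (fun i => sig (t + 1) i / 2) + h ⬝ᵥ mu (t + 1) + vhi (t + 1) ⬝ᵥ nhi (t + 1)
          - vlo (t + 1) ⬝ᵥ nlo (t + 1) := by
      intro t ht
      have : t + 1 < T' + 1 := Nat.succ_lt_succ (Finset.mem_range.mp ht)
      simp [shiftS, shiftHi, this]
    rw [hz, Finset.sum_congr rfl hc]; ring
  have hlam0 : shiftT (T' + 1) lam 0 = lam 1 := by simp [shiftT]
  simp only [dualObj, hSρ, hSσ, hlam0, add_dotProduct, sub_dotProduct, dotProduct_sub,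
    sqNorm_shift_expand]
  linarith [e1, e2]
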